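/- Let σ ∈ S_n be a permutation with n_σ disjoint cycles of lengths l_1, ..., l_{n_σ} (including fixed points as cycles of length 1), let d | r, p = r/d, and k = gcd(d, l_1, ..., l_{n_σ}). Then the number of n-tuples (a_1, ..., a_n) ∈ (Z/rZ)^n such that a_i is constant on each cycle of σ and a_1 + ... + a_n ≡ 0 (mod d) equals k · p · r^{n_σ - 1}. -/

import Mathlib

open Equiv Equiv.Perm Finset

namespace CountAux

variable {α : Type*} (σ : Equiv.Perm α)

lemma apply_zpow_invariant {β : Type*} {a : α → β} (ha : ∀ i, a (σ i) = a i) :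
    ∀ (k : ℤ) (x : α), a ((σ ^ k) x) = a x := by
  have hn : ∀ (m : ℕ) (x : α), a ((σ ^ m) x) = a x := by
    intro m
    induction m with
    | zero => simp
    | succ m ih => intro x; rw [pow_succ, Equiv.Perm.mul_apply, ih, ha]
  intro k x
  obtain ⟨m, rfl | rfl⟩ := Int.eq_nat_or_neg k
  · rw [zpow_natCast]; exact hn m x
  · rw [zpow_neg, zpow_natCast]
    have := hn m ((σ ^ m)⁻¹ x)
    rw [show (σ ^ m) ((σ ^ m)⁻¹ x) = x from (σ ^ m).apply_symm_apply x] at this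
    exact this.symm

lemma invariant_of_sameCycle {β : Type*} {a : α → β} (ha : ∀ i, a (σ i) = a i)
    {x y : α} (h : σ.SameCycle x y) : a y = a x := by
  obtain ⟨k, hk⟩ := h
  rw [← hk, apply_zpow_invariant σ ha]

lemma eq_of_sameCycle_fixed {x y : α} (hx : σ x = x) (h : σ.SameCycle x y) : y = x := by
  obtain ⟨k, hk⟩ := h
  rw [← hk, Equiv.Perm.zpow_apply_eq_self_of_apply_eq_self hx]

lemma exists_gcd_rep {ι : Type*} [DecidableEq ι] (s : Finset ι) (f : ι → ℕ) :
    ∃ c : ι → ℤ, ∑ i ∈ s, c i * f i = ((s.gcd f : ℕ) : ℤ) := by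
  induction s using Finset.induction_on with
  | empty => exact ⟨0, by simp⟩
  | @insert a s ha ih =>
    obtain ⟨c, hc⟩ := ih
    refine ⟨fun i => if i = a then Nat.gcdA (f a) (s.gcd f)
      else Nat.gcdB (f a) (s.gcd f) * c i, ?_⟩
    rw [Finset.sum_insert ha, Finset.gcd_insert]
    have h1 : ∑ i ∈ s, (if i = a then Nat.gcdA (f a) (s.gcd f)
        else Nat.gcdB (f a) (s.gcd f) * c i) * f i
        = Nat.gcdB (f a) (s.gcd f) * ∑ i ∈ s, c i * f i := by
      rw [Finset.mul_sum]
      refine Finset.sum_congr rfl fun i hi => ?_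
      rw [if_neg (by rintro rfl; exact ha hi), mul_assoc]
    have h2 : GCDMonoid.gcd (f a) (s.gcd f) = Nat.gcd (f a) (s.gcd f) := rfl
    rw [h1, hc, h2, Nat.gcd_eq_gcd_ab]
    simp only [if_pos]
    ring

end CountAux

/-- Let `σ ∈ S_n` have `n_σ` disjoint cycles of lengths `l_1, …, l_{n_σ}`
(including fixed points as cycles of length `1`; these lengths form the multiset `L` below),
let `d ∣ r`, `p = r/d`, and `k = gcd(d, l_1, …, l_{n_σ})`. Then the number of `n`-tuples
`a ∈ (ℤ/rℤ)^n` that are constant on each cycle of `σ` and satisfy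
`a_1 + ⋯ + a_n ≡ 0 (mod d)` is `k · p · r^(n_σ - 1)`. -/
theorem count_cycle_constant_tuples (r d n : ℕ) (hdr : d ∣ r) (hr : 0 < r) (hd : 0 < d)
    (hn : 0 < n) (σ : Equiv.Perm (Fin n)) :
    Nat.card {a : Fin n → ZMod r //
        (∀ i, a (σ i) = a i) ∧ ZMod.castHom hdr (ZMod d) (∑ i, a i) = 0}
      = Nat.gcd d (σ.cycleType + Multiset.replicate (n - σ.support.card) 1).gcd
          * (r / d)
          * r ^ (Multiset.card (σ.cycleType + Multiset.replicate (n - σ.support.card) 1) - 1)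
    := by
  classical
  haveI : NeZero r := ⟨hr.ne'⟩
  haveI : NeZero d := ⟨hd.ne'⟩
  set L : Multiset ℕ := σ.cycleType + Multiset.replicate (n - σ.support.card) 1 with hLdef
  letI st : Setoid (Fin n) := Equiv.Perm.SameCycle.setoid σ
  let Q := Quotient st
  letI : Fintype Q := Fintype.ofFinite Q
  let mk : Fin n → Q := Quotient.mk st
  have mk_surj : Function.Surjective mk := fun q => ⟨q.out, Quotient.out_eq q⟩
  have mk_eq_iff : ∀ x y : Fin n, mk x = mk y ↔ σ.SameCycle x y := fun x y => Quotient.eq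
  have out_sc : ∀ x : Fin n, σ.SameCycle (mk x).out x := fun x =>
    (mk_eq_iff _ _).1 (Quotient.out_eq (mk x))
  let size : Q → ℕ := fun q => (Finset.univ.filter fun i => mk i = q).card
  -- the fibers
  have fiber_fixed : ∀ q : Q, σ q.out = q.out →
      (Finset.univ.filter fun i => mk i = q) = {q.out} := by
    intro q hq
    ext i
    simp only [Finset.mem_filter, Finset.mem_univ, true_and, Finset.mem_singleton]
    constructor
    · intro h
      exact CountAux.eq_of_sameCycle_fixed σ hq
        ((mk_eq_iff q.out i).1 ((Quotient.out_eq q).trans h.symm))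
    · rintro rfl; exact Quotient.out_eq q
  have fiber_cycle : ∀ q : Q, σ q.out ≠ q.out →
      (Finset.univ.filter fun i => mk i = q) = (σ.cycleOf q.out).support := by
    intro q hq
    ext i
    simp only [Finset.mem_filter, Finset.mem_univ, true_and,
      Equiv.Perm.mem_support_cycleOf_iff]
    constructor
    · intro h
      exact ⟨(mk_eq_iff q.out i).1 ((Quotient.out_eq q).trans h.symm),
        Equiv.Perm.mem_support.2 hq⟩
    · intro h
      rw [← Quotient.out_eq q]
      exact ((mk_eq_iff i q.out).2 h.1.symm)
  have hfix_iff : ∀ x : Fin n, σ (mk x).out = (mk x).out ↔ σ x = x := by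
    intro x
    constructor
    · intro h
      have hx : x = (mk x).out := CountAux.eq_of_sameCycle_fixed σ h (out_sc x)
      rw [hx]; exact h
    · intro h
      have hx : (mk x).out = x := CountAux.eq_of_sameCycle_fixed σ h (out_sc x).symm
      rw [hx]; exact h
  have out_eq' : ∀ q : Q, mk q.out = q := fun q => Quotient.out_eq q
  have key : (Finset.univ.val.map size : Multiset ℕ) = L := by
    have hmap : (σ.cycleFactorsFinset.disjSum σ.supportᶜ).val.map
        (Sum.elim (fun c : Equiv.Perm (Fin n) => c.support.card) (fun _ : Fin n => 1)) = L := by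
      rw [Finset.val_disjSum, Multiset.disjSum, Multiset.map_add, Multiset.map_map,
        Multiset.map_map]
      rw [hLdef, Equiv.Perm.cycleType_def]
      congr 1
      rw [show ((Sum.elim (fun c : Equiv.Perm (Fin n) => c.support.card) fun _ : Fin n => 1) ∘
        Sum.inr) = (fun _ : Fin n => 1) from rfl, Multiset.map_const', ← Finset.card_def,
        Finset.card_compl, Fintype.card_fin]
    rw [← hmap]
    refine Multiset.map_eq_map_of_bij_of_nodup size _ Finset.univ.nodup
      (σ.cycleFactorsFinset.disjSum σ.supportᶜ).nodup
      (fun q _ => if h : σ q.out = q.out then Sum.inr q.out else Sum.inl (σ.cycleOf q.out))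
      ?_ ?_ ?_ ?_
    · intro q _
      by_cases h : σ q.out = q.out
      · simp only [dif_pos h]
        exact (Finset.inr_mem_disjSum (s := σ.cycleFactorsFinset)).2 (Finset.mem_compl.2 (Equiv.Perm.notMem_support.2 h))
      · simp only [dif_neg h]
        exact (Finset.inl_mem_disjSum (t := σ.supportᶜ)).2
          (Equiv.Perm.cycleOf_mem_cycleFactorsFinset_iff.2 (Equiv.Perm.mem_support.2 h))
    · intro q₁ h₁ q₂ h₂ heq
      by_cases ha : σ q₁.out = q₁.out <;> by_cases hb : σ q₂.out = q₂.out
      · simp only [dif_pos ha, dif_pos hb] at heq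
        exact Quotient.out_injective (Sum.inr.inj heq)
      · simp only [dif_pos ha, dif_neg hb] at heq; exact absurd heq (by simp)
      · simp only [dif_neg ha, dif_pos hb] at heq; exact absurd heq (by simp)
      · simp only [dif_neg ha, dif_neg hb] at heq
        have hcyc : σ.cycleOf q₁.out = σ.cycleOf q₂.out := Sum.inl.inj heq
        have h2in : q₂.out ∈ (σ.cycleOf q₂.out).support :=
          Equiv.Perm.mem_support_cycleOf_iff.2
            ⟨Equiv.Perm.SameCycle.refl _ _, Equiv.Perm.mem_support.2 hb⟩
        rw [← hcyc, Equiv.Perm.mem_support_cycleOf_iff] at h2in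
        have : mk q₁.out = mk q₂.out := (mk_eq_iff _ _).2 h2in.1
        rwa [out_eq', out_eq'] at this
    · rintro (c | x) hmem
      · have hc : c ∈ σ.cycleFactorsFinset := (Finset.inl_mem_disjSum (t := σ.supportᶜ)).1 hmem
        obtain ⟨x, hxc⟩ := (Equiv.Perm.mem_cycleFactorsFinset_iff.1 hc).1.nonempty_support
        have hx : σ x ≠ x := by
          have := (Equiv.Perm.mem_cycleFactorsFinset_iff.1 hc).2 x hxc
          rw [← this]
          exact Equiv.Perm.mem_support.1 hxc
        refine ⟨mk x, Finset.mem_univ _, ?_⟩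
        simp only [dif_neg (fun hfo => hx ((hfix_iff x).1 hfo))]
        congr 1
        rw [(out_sc x).cycleOf_eq]
        exact (Equiv.Perm.cycle_is_cycleOf hxc hc).symm
      · have hx : σ x = x :=
          Equiv.Perm.notMem_support.1 (Finset.mem_compl.1 ((Finset.inr_mem_disjSum (s := σ.cycleFactorsFinset)).1 hmem))
        refine ⟨mk x, Finset.mem_univ _, ?_⟩
        simp only [dif_pos ((hfix_iff x).2 hx)]
        congr 1
        exact (CountAux.eq_of_sameCycle_fixed σ ((hfix_iff x).2 hx) (out_sc x)).symm
    · intro q _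
      by_cases h : σ q.out = q.out
      · simp only [dif_pos h]
        show size q = 1
        show (Finset.univ.filter fun i => mk i = q).card = 1
        rw [fiber_fixed q h, Finset.card_singleton]
      · simp only [dif_neg h]
        show size q = (σ.cycleOf q.out).support.card
        show (Finset.univ.filter fun i => mk i = q).card = _
        rw [fiber_cycle q h]
  have hmQ : Multiset.card L = Fintype.card Q := by
    rw [← key, Multiset.card_map]; exact Finset.card_univ
  have hgL : L.gcd = Finset.univ.gcd size := by rw [Finset.gcd_def, key]
  set g : ℕ := Finset.univ.gcd size with hgdef
  have hsum : ∀ {M : Type} [AddCommMonoid M] (b : Q → M),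
      ∑ i, b (mk i) = ∑ q : Q, size q • b q := by
    intro M _ b
    rw [Finset.sum_comp b mk, Finset.image_univ_of_surjective mk_surj]
  let φ : (Q → ZMod r) →+ ZMod d :=
    { toFun := fun b => ∑ q : Q, size q • (ZMod.castHom hdr (ZMod d)) (b q)
      map_zero' := by simp
      map_add' := fun b c => by
        simp only [Pi.add_apply, map_add, smul_add, Finset.sum_add_distrib] }
  have hφ : ∀ b : Q → ZMod r,
      φ b = ∑ q : Q, size q • (ZMod.castHom hdr (ZMod d)) (b q) := fun _ => rfl
  let toK : {a : Fin n → ZMod r //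
      (∀ i, a (σ i) = a i) ∧ ZMod.castHom hdr (ZMod d) (∑ i, a i) = 0} → φ.ker := by
    rintro ⟨a, ha, h0⟩
    refine ⟨Quotient.lift a (fun x y h => (CountAux.invariant_of_sameCycle σ ha h).symm), ?_⟩
    have hφa : φ (Quotient.lift a (fun x y h => (CountAux.invariant_of_sameCycle σ ha h).symm))
        = ZMod.castHom hdr (ZMod d) (∑ i, a i) := by
      rw [hφ, ← hsum, map_sum]
      exact Finset.sum_congr rfl fun i _ => rfl
    exact AddMonoidHom.mem_ker.2 (hφa.trans h0)
  let fromK : φ.ker → {a : Fin n → ZMod r //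
      (∀ i, a (σ i) = a i) ∧ ZMod.castHom hdr (ZMod d) (∑ i, a i) = 0} := by
    rintro ⟨b, hb⟩
    refine ⟨fun i => b (mk i), fun i => ?_, ?_⟩
    · exact congrArg b ((mk_eq_iff (σ i) i).2 ⟨-1, by simp⟩)
    · rw [map_sum, hsum (fun q => (ZMod.castHom hdr (ZMod d)) (b q))]
      exact AddMonoidHom.mem_ker.1 hb
  have e : {a : Fin n → ZMod r //
      (∀ i, a (σ i) = a i) ∧ ZMod.castHom hdr (ZMod d) (∑ i, a i) = 0} ≃ φ.ker := by
    refine ⟨toK, fromK, fun a => ?_, fun b => ?_⟩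
    · obtain ⟨a, ha, h0⟩ := a
      rfl
    · obtain ⟨b, hb⟩ := b
      refine Subtype.ext (funext fun q => ?_)
      induction q using Quotient.ind with
      | _ x => rfl
  have hcount : Nat.card {a : Fin n → ZMod r //
      (∀ i, a (σ i) = a i) ∧ ZMod.castHom hdr (ZMod d) (∑ i, a i) = 0} = Nat.card φ.ker :=
    Nat.card_congr e
  have hrange : φ.range = AddSubgroup.zmultiples ((g : ZMod d)) := by
    apply le_antisymm
    · rintro x ⟨b, rfl⟩
      rw [hφ]
      apply AddSubgroup.sum_mem
      intro q _
      obtain ⟨t, ht⟩ : g ∣ size q := Finset.gcd_dvd (Finset.mem_univ q)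
      obtain ⟨m, hm⟩ := ZMod.natCast_zmod_surjective ((ZMod.castHom hdr (ZMod d)) (b q))
      rw [← hm, ht]
      exact AddSubgroup.mem_zmultiples_iff.2
        ⟨(t * m : ℤ), by push_cast [zsmul_eq_mul, nsmul_eq_mul]; ring⟩
    · rw [AddSubgroup.zmultiples_le]
      obtain ⟨c, hc⟩ := CountAux.exists_gcd_rep Finset.univ size
      refine ⟨fun q => ((c q : ℤ) : ZMod r), ?_⟩
      rw [hφ]
      have hcast : ∀ q : Q, (ZMod.castHom hdr (ZMod d)) ((c q : ℤ) : ZMod r)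
          = ((c q : ℤ) : ZMod d) := fun q => map_intCast _ _
      calc ∑ q : Q, size q • (ZMod.castHom hdr (ZMod d)) ((c q : ℤ) : ZMod r)
          = ∑ q : Q, ((c q * size q : ℤ) : ZMod d) :=
            Finset.sum_congr rfl fun q _ => by
              rw [hcast, nsmul_eq_mul]; push_cast; ring
        _ = ((∑ q : Q, c q * size q : ℤ) : ZMod d) := by push_cast; rfl
        _ = ((g : ℕ) : ZMod d) := by rw [hc]; exact Int.cast_natCast _
  have h1 : Nat.card (Q → ZMod r) = r ^ Fintype.card Q := by
    rw [Nat.card_eq_fintype_card, Fintype.card_fun, ZMod.card]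
  have h2 := AddSubgroup.card_eq_card_quotient_mul_card_addSubgroup φ.ker
  have h3 : Nat.card ((Q → ZMod r) ⧸ φ.ker) = Nat.card φ.range :=
    Nat.card_congr (QuotientAddGroup.quotientKerEquivRange φ).toEquiv
  have h4 : Nat.card φ.range = d / Nat.gcd d g := by
    rw [hrange, Nat.card_zmultiples, ZMod.addOrderOf_coe g hd.ne']
  set k : ℕ := Nat.gcd d g with hk
  have hkd : k ∣ d := Nat.gcd_dvd_left d g
  have hkpos : 0 < k := Nat.gcd_pos_of_pos_left g hd
  have hdkpos : 0 < d / k := Nat.div_pos (Nat.le_of_dvd hd hkd) hkpos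
  have hQpos : 0 < Fintype.card Q := Fintype.card_pos_iff.2 ⟨mk ⟨0, hn⟩⟩
  have hmain : (d / k) * Nat.card φ.ker = r ^ Fintype.card Q := by
    rw [← h4, ← h3, ← h2, h1]
  have hfinal : Nat.card φ.ker = k * (r / d) * r ^ (Fintype.card Q - 1) := by
    apply Nat.eq_of_mul_eq_mul_left hdkpos
    rw [hmain]
    have hassoc : (d / k) * (k * (r / d) * r ^ (Fintype.card Q - 1))
        = (d / k * k) * (r / d) * r ^ (Fintype.card Q - 1) := by ring
    rw [hassoc, Nat.div_mul_cancel hkd, Nat.mul_div_cancel' hdr]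
    conv_lhs => rw [← Nat.succ_pred_eq_of_pos hQpos]
    rw [pow_succ']
    rfl
  rw [hcount, hfinal, hgL, hmQ]
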